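/- Let M and N be matrices of the same shape, with rows indexed by a finite set R and n columns, whose entries are real polynomials in n variables. Suppose there is a function d : R → ℕ such that for each row r ∈ R, every entry of M in row r is homogeneous of degree d(r), and every entry of N in row r is a polynomial of total degree strictly less than d(r). If M, viewed as a matrix over the field of real rational functions in n variables, has rank n, then M + N also has rank n over the field of real rational functions in n variables. -/

import Mathlib

open Matrix BigOperators

noncomputable section

open MvPolynomial in
private lemma aux_homogeneousComponent_mul {σ : Type*} [DecidableEq σ]
    {p : MvPolynomial σ ℝ} {a : ℕ} (hp : p.IsHomogeneous a) (b : ℕ) (q : MvPolynomial σ ℝ) :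
    homogeneousComponent (a + b) (p * q) = p * homogeneousComponent b q := by
  have hdeg : ∀ u v : σ →₀ ℕ, (u + v).degree = u.degree + v.degree := by
    intro u v
    simp [Finsupp.degree_eq_weight_one, map_add]
  ext e
  rw [coeff_homogeneousComponent, coeff_mul, coeff_mul]
  by_cases he : e.degree = a + b
  · rw [if_pos he]
    refine Finset.sum_congr rfl ?_
    rintro ⟨u, v⟩ hx
    rw [Finset.HasAntidiagonal.mem_antidiagonal] at hx
    rw [coeff_homogeneousComponent]
    by_cases hv : v.degree = b
    · rw [if_pos hv]
    · rw [if_neg hv, mul_zero]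
      have hu : u.degree ≠ a := by
        intro hu
        apply hv
        have := hdeg u v
        rw [hx, he, hu] at this
        omega
      rw [hp.coeff_eq_zero hu, zero_mul]
  · rw [if_neg he]
    symm
    refine Finset.sum_eq_zero ?_
    rintro ⟨u, v⟩ hx
    rw [Finset.HasAntidiagonal.mem_antidiagonal] at hx
    rw [coeff_homogeneousComponent]
    by_cases hv : v.degree = b
    · rw [if_pos hv]
      by_cases hu : u.degree = a
      · exfalso
        apply he
        have := hdeg u v
        rw [hx, hu, hv] at this
        omega
      · rw [hp.coeff_eq_zero hu, zero_mul]
    · rw [if_neg hv, mul_zero]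

private lemma aux_rank_iff_injective {n : ℕ} {R K : Type*} [Fintype R] [Field K]
    (A : Matrix R (Fin n) K) : A.rank = n ↔ Function.Injective A.mulVecLin := by
  rw [Matrix.rank, ← LinearMap.ker_eq_bot]
  have h2 := LinearMap.finrank_range_add_finrank_ker A.mulVecLin
  rw [Module.finrank_pi, Fintype.card_fin] at h2
  constructor
  · intro h
    rw [← Submodule.finrank_eq_zero (R := K)]
    omega
  · intro h
    rw [h, finrank_bot K] at h2
    omega

/-- Let `M` and `N` be matrices over `ℝ[x₁,…,xₙ]` with rows indexed by a
finite set `R` and `n` columns. Suppose for some `d : R → ℕ` every entry of `M` in row `r`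
is homogeneous of degree `d r` and every entry of `N` in row `r` is zero or of total degree
strictly less than `d r`. If `M` has rank `n` over the field of rational functions
`ℝ(x₁,…,xₙ)`, then so does `M + N`. -/
theorem rank_add_lower_degree_perturbation (n : ℕ) (R : Type) [Fintype R]
    (M N : Matrix R (Fin n) (MvPolynomial (Fin n) ℝ)) (d : R → ℕ)
    (hM : ∀ r c, (M r c).IsHomogeneous (d r))
    (hN : ∀ r c, N r c = 0 ∨ (N r c).totalDegree < d r)
    (hrank : (M.map (algebraMap (MvPolynomial (Fin n) ℝ)
        (FractionRing (MvPolynomial (Fin n) ℝ)))).rank = n) :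
    ((M + N).map (algebraMap (MvPolynomial (Fin n) ℝ)
        (FractionRing (MvPolynomial (Fin n) ℝ)))).rank = n := by
  classical
  set f := algebraMap (MvPolynomial (Fin n) ℝ) (FractionRing (MvPolynomial (Fin n) ℝ))
    with hfdef
  have hf : Function.Injective f :=
    IsFractionRing.injective (MvPolynomial (Fin n) ℝ) (FractionRing (MvPolynomial (Fin n) ℝ))
  have hf0 : ∀ x, f x = 0 ↔ x = 0 := fun x => map_eq_zero_iff f hf
  rw [aux_rank_iff_injective, ← LinearMap.ker_eq_bot, LinearMap.ker_eq_bot'] at hrank ⊢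
  intro v hv
  by_contra hv0
  -- clear denominators
  obtain ⟨b, hb⟩ := IsLocalization.exist_integer_multiples_of_finite
    (nonZeroDivisors (MvPolynomial (Fin n) ℝ)) v
  choose w hw using hb
  have hwv : ∀ c, f (w c) = f (b : MvPolynomial (Fin n) ℝ) * v c := by
    intro c
    rw [hw c, Algebra.smul_def]
  have hfb : f (b : MvPolynomial (Fin n) ℝ) ≠ 0 := by
    intro h
    exact nonZeroDivisors.coe_ne_zero b ((hf0 _).mp h)
  obtain ⟨c0, hc0⟩ : ∃ c, v c ≠ 0 := by
    by_contra h
    push_neg at h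
    exact hv0 (funext h)
  have hwc0 : w c0 ≠ 0 := by
    intro h
    apply hc0
    have := hwv c0
    rw [h, map_zero] at this
    exact (mul_eq_zero.mp this.symm).resolve_left hfb
  -- (M + N) *ᵥ w = 0 over the polynomial ring
  have hMNw : ∀ r, ∑ c, (M r c + N r c) * w c = 0 := by
    intro r
    apply hf
    rw [map_zero, map_sum]
    have hvr := congrFun hv r
    have hvr' : ∑ c, f (M r c + N r c) * v c = 0 := by
      simpa [Matrix.mulVecLin_apply, Matrix.mulVec, dotProduct,
        Matrix.map_apply] using hvr
    calc ∑ c, f ((M r c + N r c) * w c)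
        = f (b : MvPolynomial (Fin n) ℝ) * ∑ c, f (M r c + N r c) * v c := by
          rw [Finset.mul_sum]
          refine Finset.sum_congr rfl fun c _ => ?_
          rw [_root_.map_mul, hwv c]
          ring
      _ = 0 := by rw [hvr', mul_zero]
  -- the top-degree part of w
  set S : Finset (Fin n) := Finset.univ.filter (fun c => w c ≠ 0) with hS
  have hSne : S.Nonempty := ⟨c0, by simp [hS, hwc0]⟩
  set D : ℕ := S.sup' hSne (fun c => (w c).totalDegree) with hD
  have hDle : ∀ c, (w c).totalDegree ≤ D := by
    intro c
    by_cases hc : w c = 0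
    · rw [hc]
      simp
    · refine Finset.le_sup' (fun c => (w c).totalDegree) ?_
      rw [hS, Finset.mem_filter]
      exact ⟨Finset.mem_univ c, hc⟩
  obtain ⟨c1, hc1S, hc1⟩ := Finset.exists_mem_eq_sup' hSne (fun c => (w c).totalDegree)
  set w' : Fin n → MvPolynomial (Fin n) ℝ := fun c => MvPolynomial.homogeneousComponent D (w c) with hw'
  have hwc1 : w c1 ≠ 0 := by
    simp only [hS, Finset.mem_filter] at hc1S
    exact hc1S.2
  have hw'c1 : w' c1 ≠ 0 := by
    -- there is a monomial of top degree
    obtain ⟨e, he, hetop⟩ := Finset.exists_mem_eq_sup (w c1).support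
      (by rwa [MvPolynomial.support_nonempty]) (fun s => s.sum fun _ e => e)
    intro h0
    have hcoeff : MvPolynomial.coeff e (w' c1) = MvPolynomial.coeff e (w c1) := by
      rw [hw', MvPolynomial.coeff_homogeneousComponent, if_pos]
      have : e.degree = (w c1).totalDegree := by
        rw [MvPolynomial.totalDegree, hetop]
        rfl
      rw [this, ← hc1]
    rw [h0, MvPolynomial.coeff_zero] at hcoeff
    exact (MvPolynomial.mem_support_iff.mp he) hcoeff.symm
  -- M *ᵥ w' = 0 over the polynomial ring
  have hMw' : ∀ r, ∑ c, M r c * w' c = 0 := by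
    intro r
    have := congrArg (MvPolynomial.homogeneousComponent (d r + D)) (hMNw r)
    rw [map_zero, map_sum] at this
    rw [← this]
    refine Finset.sum_congr rfl fun c _ => ?_
    rw [add_mul, map_add, aux_homogeneousComponent_mul (hM r c) D (w c)]
    rcases hN r c with h | h
    · rw [h, zero_mul, map_zero, add_zero]
    · have hz : MvPolynomial.homogeneousComponent (d r + D) (N r c * w c) = 0 :=
        MvPolynomial.homogeneousComponent_eq_zero _ _ <|
          calc (N r c * w c).totalDegree ≤ (N r c).totalDegree + (w c).totalDegree :=
                MvPolynomial.totalDegree_mul _ _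
            _ < d r + D := Nat.add_lt_add_of_lt_of_le h (hDle c)
      rw [hz, add_zero]
  -- contradiction with injectivity for M
  have : (fun c => f (w' c)) = 0 := by
    apply hrank
    funext r
    simp only [Matrix.mulVecLin_apply, Matrix.mulVec, dotProduct,
      Matrix.map_apply, Pi.zero_apply]
    rw [← map_zero f, ← hMw' r, map_sum]
    exact Finset.sum_congr rfl fun c _ => (_root_.map_mul f _ _).symm
  apply hw'c1
  have := congrFun this c1
  rw [Pi.zero_apply, hf0] at this
  exact this

end
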